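/- The group ⟨W_k P_3 W_k†⟩ ∩ P_3, for W_k the Toffoli gate composed with diag(1, e^{iπ/2^{k-1}}) on qubit 3 (k ≥ 3), does not contain any maximal abelian subgroup of the 3-qubit Pauli group P_3; hence W_k is not a semi-Clifford operation. -/

import Mathlib

open Matrix Complex

/-- Index type for `n`-qubit computational basis states. -/
abbrev Q (n : ℕ) := Fin n → Fin 2

/-- The four single-qubit Pauli matrices I, X, Y, Z. -/
noncomputable def pauli1 : Fin 4 → Matrix (Fin 2) (Fin 2) ℂ :=
  ![1, !![0, 1; 1, 0], !![0, -Complex.I; Complex.I, 0], !![1, 0; 0, -1]]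

/-- The tensor product of `n` single-qubit operators. -/
noncomputable def tensorOp {n : ℕ} (f : Fin n → Matrix (Fin 2) (Fin 2) ℂ) :
    Matrix (Q n) (Q n) ℂ :=
  Matrix.of fun x y => ∏ i, f i (x i) (y i)

/-- The `n`-qubit Pauli group: tensor products of Pauli matrices with phases ±1, ±i. -/
noncomputable def PauliGroup (n : ℕ) : Set (Matrix (Q n) (Q n) ℂ) :=
  { M | ∃ (s : Fin 4) (f : Fin n → Fin 4),
      M = Complex.I ^ (s : ℕ) • tensorOp fun i => pauli1 (f i) }

/-- The Clifford hierarchy: `Ck n 1` is the Pauli group and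
`Ck n (k+1) = {U unitary : U P U† ∈ Ck n k for all Paulis P}`. -/
noncomputable def Ck (n : ℕ) : ℕ → Set (Matrix (Q n) (Q n) ℂ)
  | 0 => PauliGroup n
  | 1 => PauliGroup n
  | (k + 2) => { U | U ∈ Matrix.unitaryGroup (Q n) ℂ ∧
      ∀ P ∈ PauliGroup n, U * P * Uᴴ ∈ Ck n (k + 1) }

/-- A subgroup of the `n`-qubit Pauli group (given as a set of matrices closed
under the group operations; inverses of Paulis are conjugate transposes). -/
noncomputable def IsPauliSubgroup (n : ℕ) (G : Set (Matrix (Q n) (Q n) ℂ)) : Prop :=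
  G ⊆ PauliGroup n ∧ (1 : Matrix (Q n) (Q n) ℂ) ∈ G ∧
    (∀ A ∈ G, ∀ B ∈ G, A * B ∈ G) ∧ (∀ A ∈ G, Aᴴ ∈ G)

/-- A maximal abelian subgroup of the `n`-qubit Pauli group. -/
noncomputable def IsMaxAbelian (n : ℕ) (G : Set (Matrix (Q n) (Q n) ℂ)) : Prop :=
  IsPauliSubgroup n G ∧ (∀ A ∈ G, ∀ B ∈ G, A * B = B * A) ∧
    ∀ G', IsPauliSubgroup n G' → (∀ A ∈ G', ∀ B ∈ G', A * B = B * A) →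
      G ⊆ G' → G' ⊆ G

/-- A semi-Clifford operation: a unitary sending by conjugation some maximal
abelian subgroup of the Pauli group onto another maximal abelian subgroup. -/
noncomputable def SemiClifford (n : ℕ) (R : Matrix (Q n) (Q n) ℂ) : Prop :=
  R ∈ Matrix.unitaryGroup (Q n) ℂ ∧
    ∃ G, IsMaxAbelian n G ∧ IsMaxAbelian n ((fun A => R * A * Rᴴ) '' G)

/-- The Toffoli gate as a permutation of three-qubit basis states
(controls on qubits 1,2, target on qubit 3). -/
def toffoliFun (v : Q 3) : Q 3 :=
  Function.update v 2 (if v 0 = 1 ∧ v 1 = 1 then v 2 + 1 else v 2)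

/-- The 8×8 Toffoli gate. -/
noncomputable def Toffoli : Matrix (Q 3) (Q 3) ℂ :=
  Matrix.of fun x y => if x = toffoliFun y then 1 else 0

/-- The Pauli `Z` acting on qubit `i` of three qubits. -/
noncomputable def Zon (i : Fin 3) : Matrix (Q 3) (Q 3) ℂ :=
  Matrix.of fun x y => if x = y then (if x i = 1 then -1 else 1) else 0

/-- The controlled-Z gate on qubits 1 and 2. -/
noncomputable def CZ12 : Matrix (Q 3) (Q 3) ℂ :=
  Matrix.of fun x y => if x = y then (if x 0 = 1 ∧ x 1 = 1 then -1 else 1) else 0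

/-- The phase gate `diag(1, e^{iπ/2^{k-1}})` acting on qubit 3. -/
noncomputable def Vph (k : ℕ) : Matrix (Q 3) (Q 3) ℂ :=
  Matrix.of fun x y => if x = y then
    (if x 2 = 1 then Complex.exp ((Real.pi : ℂ) * Complex.I / 2 ^ (k - 1)) else 1) else 0

/-- The gate `W_k`: Toffoli composed with the phase gate on qubit 3. -/
noncomputable def Wgate (k : ℕ) : Matrix (Q 3) (Q 3) ℂ := Toffoli * Vph k

section Aux

noncomputable def eph (k : ℕ) : ℂ := Complex.exp ((Real.pi : ℂ) * Complex.I / 2 ^ (k - 1))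

noncomputable def vp (k : ℕ) (x : Q 3) : ℂ := if x 2 = 1 then eph k else 1

lemma tf_apply (v : Q 3) (i : Fin 3) :
    toffoliFun v i = if i = 2 then (if v 0 = 1 ∧ v 1 = 1 then v 2 + 1 else v 2) else v i :=
  Function.update_apply ..

lemma add11 : ∀ a : Fin 2, a + 1 + 1 = a := by decide

lemma tf_tf (v : Q 3) : toffoliFun (toffoliFun v) = v := by
  funext i
  rw [tf_apply]
  rcases eq_or_ne i 2 with rfl | hi
  · have e0 : toffoliFun v 0 = v 0 := by rw [tf_apply]; simp [Fin.ext_iff]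
    have e1 : toffoliFun v 1 = v 1 := by rw [tf_apply]; simp [Fin.ext_iff]
    have e2 : toffoliFun v 2 = if v 0 = 1 ∧ v 1 = 1 then v 2 + 1 else v 2 := by
      rw [tf_apply]; simp
    rw [if_pos rfl, e0, e1, e2]
    by_cases h : v 0 = 1 ∧ v 1 = 1 <;> simp [h, add11]
  · rw [if_neg hi, tf_apply, if_neg hi]

lemma Wgate_apply (k : ℕ) (x y : Q 3) :
    Wgate k x y = if x = toffoliFun y then vp k y else 0 := by
  classical
  unfold Wgate
  rw [Matrix.mul_apply]
  rw [Finset.sum_eq_single y]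
  · simp only [Toffoli, Vph, vp, eph, Matrix.of_apply, if_pos rfl]
    by_cases h : x = toffoliFun y <;> simp [h]
  · intro z _ hz
    simp [Vph, hz]
  · simp

lemma conjTranspose_Wgate_apply (k : ℕ) (x y : Q 3) :
    (Wgate k)ᴴ x y = if y = toffoliFun x then (starRingEnd ℂ) (vp k x) else 0 := by
  rw [Matrix.conjTranspose_apply, Wgate_apply]
  split <;> simp

lemma Wconj_apply (k : ℕ) (P : Matrix (Q 3) (Q 3) ℂ) (x y : Q 3) :
    ((Wgate k)ᴴ * P * Wgate k) x y
      = (starRingEnd ℂ) (vp k x) * vp k y * P (toffoliFun x) (toffoliFun y) := by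
  classical
  rw [Matrix.mul_apply]
  have h1 : ∀ z, ((Wgate k)ᴴ * P) x z = (starRingEnd ℂ) (vp k x) * P (toffoliFun x) z := by
    intro z
    rw [Matrix.mul_apply, Finset.sum_eq_single (toffoliFun x)]
    · rw [conjTranspose_Wgate_apply]; simp [tf_tf]
    · intro w _ hw
      rw [conjTranspose_Wgate_apply]
      have : w ≠ toffoliFun x → (if w = toffoliFun x then (starRingEnd ℂ) (vp k x) else 0) = 0 := by
        intro h; simp [h]
      simp [hw]
    · simp
  simp_rw [h1]
  rw [Finset.sum_eq_single (toffoliFun y)]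
  · rw [Wgate_apply]; simp [tf_tf]; ring
  · intro z _ hz
    rw [Wgate_apply]
    have : ¬ (z = toffoliFun y) := hz
    simp [this]
  · simp

lemma conj_vp_mul_self (k : ℕ) (x : Q 3) : (starRingEnd ℂ) (vp k x) * vp k x = 1 := by
  unfold vp eph
  split
  · rw [← Complex.exp_conj, ← Complex.exp_add]
    have : (starRingEnd ℂ) ((Real.pi : ℂ) * I / 2 ^ (k-1)) + (Real.pi : ℂ) * I / 2 ^ (k - 1) = 0 := by
      have h2 : (starRingEnd ℂ) ((Real.pi : ℂ) * I / 2 ^ (k-1)) = -((Real.pi : ℂ) * I / 2 ^ (k-1)) := by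
        rw [map_div₀, _root_.map_mul, map_pow]
        simp [Complex.conj_I, Complex.conj_ofReal, map_ofNat]
        ring
      rw [h2]; ring
    rw [this, Complex.exp_zero]
  · simp

lemma WHW (k : ℕ) : (Wgate k)ᴴ * Wgate k = 1 := by
  classical
  ext x y
  rw [Matrix.mul_apply, Finset.sum_eq_single (toffoliFun x)]
  · rw [conjTranspose_Wgate_apply, Wgate_apply]
    simp only [tf_tf, if_true]
    by_cases h : x = y
    · subst h; simp [conj_vp_mul_self, Matrix.one_apply]
    · have : ¬ (toffoliFun x = toffoliFun y) := by
        intro hh; exact h (by rw [← tf_tf x, hh, tf_tf])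
      simp [Matrix.one_apply, h, this]
  · intro z _ hz
    rw [conjTranspose_Wgate_apply]
    simp [hz]
  · simp

def od : Fin 4 → Fin 2 := ![0, 1, 1, 0]

lemma pauli1_zero {c : Fin 4} {a b : Fin 2} (h : b ≠ a + od c) : pauli1 c a b = 0 := by
  fin_cases c <;> fin_cases a <;> fin_cases b <;> simp_all [pauli1, od, Matrix.one_apply] <;> exact absurd rfl (by simpa using h)

lemma pauli1_pow4 (c : Fin 4) (a : Fin 2) : (pauli1 c a (a + od c)) ^ 4 = 1 := by
  fin_cases c <;> fin_cases a <;>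
    simp only [od, pauli1] <;>
    norm_num [Matrix.one_apply] <;>
    try rw [show ((2:Fin 2)) = 0 from rfl]
  all_goals norm_num [Complex.I_pow_four]
  all_goals ring_nf
  all_goals norm_num [Complex.I_pow_four]
  all_goals simp [show (1 + 1 : Fin 2) = 0 from rfl]

lemma pauli1_pow4' (c : Fin 4) (a b : Fin 2) :
    (pauli1 c a b) ^ 4 = 0 ∨ (pauli1 c a b) ^ 4 = 1 := by
  by_cases h : b = a + od c
  · right; rw [h]; exact pauli1_pow4 c a
  · left; rw [pauli1_zero h]; ring

lemma Ipow4 (s : ℕ) : (Complex.I ^ s) ^ 4 = 1 := by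
  rw [← pow_mul, mul_comm, pow_mul, Complex.I_pow_four, one_pow]

lemma pauli1_conj_symm {c : Fin 4} (h : od c = 0) (a b : Fin 2) :
    (starRingEnd ℂ) (pauli1 c b a) = pauli1 c a b := by
  fin_cases c <;> simp_all [od] <;> fin_cases a <;> fin_cases b <;> simp [pauli1, Matrix.one_apply]

lemma pauli1_diag_mul {c d : Fin 4} (hc : od c = 0) (hd : od d = 0) (a : Fin 2) :
    pauli1 c a a * pauli1 d a a = pauli1 (if c = d then 0 else 3) a a := by
  fin_cases c <;> fin_cases d <;> simp_all [od] <;> fin_cases a <;> norm_num [pauli1, Matrix.one_apply]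
  all_goals simp [Matrix.cons_val]

lemma pauli_entry_pow4 {M : Matrix (Q 3) (Q 3) ℂ} (hM : M ∈ PauliGroup 3) (x y : Q 3) :
    (M x y) ^ 4 = 0 ∨ (M x y) ^ 4 = 1 := by
  obtain ⟨s, f, rfl⟩ := hM
  simp only [Matrix.smul_apply, tensorOp, Matrix.of_apply, smul_eq_mul]
  rw [mul_pow, Ipow4, one_mul, ← Finset.prod_pow]
  rw [Fin.prod_univ_three]
  rcases pauli1_pow4' (f 0) (x 0) (y 0) with h0 | h0 <;>
  rcases pauli1_pow4' (f 1) (x 1) (y 1) with h1 | h1 <;>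
  rcases pauli1_pow4' (f 2) (x 2) (y 2) with h2 | h2 <;>
    rw [h0, h1, h2] <;> norm_num

lemma pauli_fourpoint {M : Matrix (Q 3) (Q 3) ℂ} (hM : M ∈ PauliGroup 3) :
    M ![0,0,0] ![0,0,0] * M ![1,1,0] ![1,1,0]
      = M ![1,0,0] ![1,0,0] * M ![0,1,0] ![0,1,0] := by
  obtain ⟨s, f, rfl⟩ := hM
  simp only [Matrix.smul_apply, tensorOp, Matrix.of_apply, smul_eq_mul, Fin.prod_univ_three,
    Matrix.cons_val_zero, Matrix.cons_val_one, Matrix.head_cons, Matrix.cons_val_two,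
    Matrix.tail_cons]
  ring

lemma fin2_cases : ∀ a : Fin 2, a = 0 ∨ a = 1 := by decide

lemma exp_I_ne_one {r : ℝ} (h0 : 0 < r) (h1 : r < 2 * Real.pi) :
    Complex.exp ((r : ℂ) * Complex.I) ≠ 1 ∧ Complex.exp (-((r : ℂ) * Complex.I)) ≠ 1 := by
  constructor <;> intro h <;> rw [Complex.exp_eq_one_iff] at h <;> obtain ⟨n, hn⟩ := h <;>
    have him := congrArg Complex.im hn <;>
    simp [Complex.mul_I_im, Complex.ofReal_re, Complex.ofReal_im] at him
  · -- r = n * (2π)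
    have hn0 : (0 : ℝ) < (n : ℝ) := by nlinarith [Real.pi_pos]
    have hn1 : (1 : ℝ) ≤ (n : ℝ) := by exact_mod_cast (by exact_mod_cast hn0 : (0:ℤ) < n)
    nlinarith [Real.pi_pos]
  · have hn0 : ((n : ℝ)) < 0 := by nlinarith [Real.pi_pos]
    have hn0' : n < 0 := by exact_mod_cast hn0
    have hn1 : ((n : ℝ)) ≤ -1 := by exact_mod_cast (by omega : n ≤ -1)
    nlinarith [Real.pi_pos]

lemma eph_pow4 (k : ℕ) :
    (eph k) ^ 4 = Complex.exp (((4 * Real.pi / 2 ^ (k - 1) : ℝ) : ℂ) * Complex.I) := by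
  rw [eph, ← Complex.exp_nat_mul]
  congr 1
  push_cast
  ring

lemma conj_eph_pow4 (k : ℕ) :
    ((starRingEnd ℂ) (eph k)) ^ 4
      = Complex.exp (-(((4 * Real.pi / 2 ^ (k - 1) : ℝ) : ℂ) * Complex.I)) := by
  rw [eph, ← Complex.exp_conj, ← Complex.exp_nat_mul]
  congr 1
  rw [map_div₀, _root_.map_mul, map_pow]
  simp [Complex.conj_I, Complex.conj_ofReal, map_ofNat]
  push_cast
  ring

lemma r_bounds {k : ℕ} (hk : 3 ≤ k) :
    (0 : ℝ) < 4 * Real.pi / 2 ^ (k - 1) ∧ 4 * Real.pi / 2 ^ (k - 1) < 2 * Real.pi := by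
  have hp := Real.pi_pos
  have h4 : (4 : ℝ) ≤ 2 ^ (k - 1) := by
    calc (4:ℝ) = 2 ^ 2 := by norm_num
    _ ≤ 2 ^ (k-1) := by
      apply pow_le_pow_right₀ (by norm_num)
      omega
  constructor
  · positivity
  · rw [div_lt_iff₀ (by positivity)]
    nlinarith

lemma eph4_ne_one {k : ℕ} (hk : 3 ≤ k) :
    (eph k) ^ 4 ≠ 1 ∧ ((starRingEnd ℂ) (eph k)) ^ 4 ≠ 1 := by
  obtain ⟨h0, h1⟩ := r_bounds hk
  obtain ⟨ha, hb⟩ := exp_I_ne_one h0 h1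
  rw [eph_pow4, conj_eph_pow4]
  exact ⟨ha, hb⟩

lemma eph_ne_zero (k : ℕ) : eph k ≠ 0 := Complex.exp_ne_zero _

lemma vp_ne_zero (k : ℕ) (x : Q 3) : vp k x ≠ 0 := by
  unfold vp; split
  · exact eph_ne_zero k
  · exact one_ne_zero

lemma pauli_conj_diag {k : ℕ} (hk : 3 ≤ k) {P : Matrix (Q 3) (Q 3) ℂ}
    (hP : P ∈ PauliGroup 3) (hM : (Wgate k)ᴴ * P * Wgate k ∈ PauliGroup 3) :
    ∀ x y, x ≠ y → P x y = 0 := by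
  obtain ⟨s, f, rfl⟩ := hP
  by_cases hd : ∀ i, od (f i) = 0
  · intro x y hxy
    obtain ⟨i, hi⟩ : ∃ i, x i ≠ y i := by
      by_contra hall; push_neg at hall; exact hxy (funext hall)
    have hz : pauli1 (f i) (x i) (y i) = 0 := by
      apply pauli1_zero
      rw [hd i, add_zero]
      exact Ne.symm hi
    simp only [Matrix.smul_apply, tensorOp, Matrix.of_apply, smul_eq_mul]
    rw [Finset.prod_eq_zero (Finset.mem_univ i) hz, mul_zero]
  · exfalso
    push_neg at hd
    have contra : ∀ u d : Q 3, (∀ i, od (f i) = d i) →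
        (toffoliFun u) 2 ≠ (toffoliFun (fun i => u i + d i)) 2 → False := by
      intro u d hud h2
      set v : Q 3 := fun i => u i + d i with hv
      have hMxy := pauli_entry_pow4 hM (toffoliFun u) (toffoliFun v)
      rw [Wconj_apply, tf_tf, tf_tf] at hMxy
      have hPuv : ((Complex.I ^ (s : ℕ) • tensorOp fun i => pauli1 (f i)) u v) ^ 4 = 1 := by
        simp only [Matrix.smul_apply, tensorOp, Matrix.of_apply, smul_eq_mul]
        rw [mul_pow, Ipow4, one_mul, ← Finset.prod_pow, Fin.prod_univ_three]
        have e0 : v 0 = u 0 + od (f 0) := by rw [hud 0]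
        have e1 : v 1 = u 1 + od (f 1) := by rw [hud 1]
        have e2 : v 2 = u 2 + od (f 2) := by rw [hud 2]
        rw [e0, e1, e2, pauli1_pow4, pauli1_pow4, pauli1_pow4]
        norm_num
      rw [mul_pow, mul_pow, hPuv, mul_one] at hMxy
      -- hMxy : conj(vp x)^4 * (vp y)^4 = 0 ∨ = 1
      rcases hMxy with h | h
      · rcases mul_eq_zero.mp h with h' | h'
        · exact pow_ne_zero 4 (by simpa using (vp_ne_zero k (toffoliFun u))) h'
        · exact pow_ne_zero 4 (vp_ne_zero k (toffoliFun v)) h'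
      · rcases fin2_cases ((toffoliFun u) 2) with hx2 | hx2 <;>
          rcases fin2_cases ((toffoliFun v) 2) with hy2 | hy2
        · exact h2 (hx2.trans hy2.symm)
        · -- x2 = 0, y2 = 1 : 1 * eph^4 = 1
          rw [show vp k (toffoliFun u) = 1 by simp [vp, hx2],
              show vp k (toffoliFun v) = eph k by simp [vp, hy2]] at h
          simp only [_root_.map_one, one_pow, one_mul] at h
          exact (eph4_ne_one hk).1 h
        · rw [show vp k (toffoliFun u) = eph k by simp [vp, hx2],
              show vp k (toffoliFun v) = 1 by simp [vp, hy2]] at h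
          simp only [one_pow, mul_one] at h
          exact (eph4_ne_one hk).2 h
        · exact h2 (hx2.trans hy2.symm)
    obtain ⟨j, hj⟩ := hd
    rcases fin2_cases (od (f 0)) with h0 | h0 <;>
      rcases fin2_cases (od (f 1)) with h1 | h1 <;>
      rcases fin2_cases (od (f 2)) with h2 | h2
    · fin_cases j <;> simp_all
    · exact contra ![0,0,0] ![0,0,1]
        (by intro i; fin_cases i <;> simp_all) (by decide)
    · exact contra ![1,0,0] ![0,1,0]
        (by intro i; fin_cases i <;> simp_all) (by decide)
    · exact contra ![0,0,0] ![0,1,1]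
        (by intro i; fin_cases i <;> simp_all) (by decide)
    · exact contra ![0,1,0] ![1,0,0]
        (by intro i; fin_cases i <;> simp_all) (by decide)
    · exact contra ![0,0,0] ![1,0,1]
        (by intro i; fin_cases i <;> simp_all) (by decide)
    · exact contra ![0,0,0] ![1,1,0]
        (by intro i; fin_cases i <;> simp_all) (by decide)
    · exact contra ![1,0,0] ![1,1,1]
        (by intro i; fin_cases i <;> simp_all) (by decide)

lemma Ipow_mod (a : ℕ) : Complex.I ^ (a % 4) = Complex.I ^ a := by
  conv_rhs => rw [← Nat.div_add_mod a 4]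
  rw [pow_add, pow_mul, Complex.I_pow_four, one_pow, one_mul]

lemma pow4_one_ne_zero {z : ℂ} (h : z ^ 4 = 1) : z ≠ 0 := by
  intro h0; rw [h0] at h; norm_num at h

lemma tensor_offdiag_zero {s : Fin 4} {f : Fin 3 → Fin 4} (hf : ∀ i, od (f i) = 0)
    {x y : Q 3} (hxy : x ≠ y) :
    (Complex.I ^ ((s : Fin 4) : ℕ) • tensorOp fun i => pauli1 (f i)) x y = 0 := by
  obtain ⟨i, hi⟩ : ∃ i, x i ≠ y i := by
    by_contra hall; push_neg at hall; exact hxy (funext hall)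
  have hz : pauli1 (f i) (x i) (y i) = 0 := by
    apply pauli1_zero
    rw [hf i, add_zero]
    exact Ne.symm hi
  simp only [Matrix.smul_apply, tensorOp, Matrix.of_apply, smul_eq_mul]
  rw [Finset.prod_eq_zero (Finset.mem_univ i) hz, mul_zero]

lemma diag_rep {s : Fin 4} {f : Fin 3 → Fin 4}
    (hdiag : ∀ x y, x ≠ y →
      (Complex.I ^ ((s : Fin 4) : ℕ) • tensorOp fun i => pauli1 (f i)) x y = 0) :
    ∀ i, od (f i) = 0 := by
  by_contra h
  push_neg at h
  obtain ⟨j, hj⟩ := h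
  set u : Q 3 := fun _ => 0 with hu
  set v : Q 3 := fun i => od (f i) with hv
  have huv : u ≠ v := by
    intro h'
    exact hj (congrFun h'.symm j)
  have h0 := hdiag u v huv
  simp only [Matrix.smul_apply, tensorOp, Matrix.of_apply, smul_eq_mul] at h0
  rcases mul_eq_zero.mp h0 with h' | h'
  · exact pow_ne_zero _ Complex.I_ne_zero h'
  · rw [Finset.prod_eq_zero_iff] at h'
    obtain ⟨i, _, hzero⟩ := h'
    have : v i = u i + od (f i) := by rw [hv, hu]; simp
    rw [this] at hzero
    exact pow4_one_ne_zero (pauli1_pow4 (f i) (u i)) hzero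

lemma diag_mul_apply {A B : Matrix (Q 3) (Q 3) ℂ}
    (hAd : ∀ x y, x ≠ y → A x y = 0) (x y : Q 3) :
    (A * B) x y = A x x * B x y := by
  rw [Matrix.mul_apply, Finset.sum_eq_single x]
  · intro z _ hz
    rw [hAd x z (Ne.symm hz), zero_mul]
  · intro h; exact absurd (Finset.mem_univ x) h

lemma one_mem_pauli : (1 : Matrix (Q 3) (Q 3) ℂ) ∈ PauliGroup 3 := by
  refine ⟨0, fun _ => 0, ?_⟩
  ext x y
  by_cases h : x = y
  · subst h
    simp only [Matrix.smul_apply, tensorOp, Matrix.of_apply, smul_eq_mul, Fin.val_zero,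
      pow_zero, one_mul, Matrix.one_apply_eq]
    rw [Finset.prod_eq_one]
    intro i _
    show pauli1 0 (x i) (x i) = 1
    have : pauli1 0 = 1 := rfl
    rw [this, Matrix.one_apply_eq]
  · rw [Matrix.one_apply_ne h]
    exact (tensor_offdiag_zero (s := 0) (fun _ => by decide) h).symm

lemma pauli3_diag (a : Fin 2) : pauli1 3 a a = if a = 1 then -1 else 1 := by
  fin_cases a <;> simp [pauli1]

lemma Zon2_rep : Zon 2 = Complex.I ^ ((0 : Fin 4) : ℕ) • tensorOp fun i => pauli1 (![0,0,3] i) := by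
  ext x y
  by_cases h : x = y
  · subst h
    simp only [Matrix.smul_apply, tensorOp, Matrix.of_apply, smul_eq_mul, Fin.val_zero,
      pow_zero, one_mul, Zon, Fin.prod_univ_three, eq_self_iff_true, if_true]
    have e0 : pauli1 (![0,0,3] 0) (x 0) (x 0) = 1 := Matrix.one_apply_eq _
    have e1 : pauli1 (![0,0,3] 1) (x 1) (x 1) = 1 := Matrix.one_apply_eq _
    have e2 : pauli1 (![0,0,3] 2) (x 2) (x 2) = if x 2 = 1 then -1 else 1 := pauli3_diag _
    rw [e0, e1, e2, one_mul, one_mul]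
  · rw [show Zon 2 x y = 0 by simp [Zon, h]]
    exact (tensor_offdiag_zero (s := 0) (by decide) h).symm

lemma Zon2_diag : ∀ x y : Q 3, x ≠ y → Zon 2 x y = 0 := by
  intro x y h; simp [Zon, h]

lemma Zon2_mem_pauli : Zon 2 ∈ PauliGroup 3 := ⟨0, fun i => ![0,0,3] i, Zon2_rep⟩

lemma conj_Ipow (s : Fin 4) :
    (starRingEnd ℂ) (Complex.I ^ (s : ℕ)) = Complex.I ^ ((![0,3,2,1] s : Fin 4) : ℕ) := by
  fin_cases s <;>
    norm_num [Complex.conj_I, pow_succ, Complex.I_sq,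
      show (((3:Fin 4)):ℕ) = 3 from rfl, show (((2:Fin 4)):ℕ) = 2 from rfl,
      show (((1:Fin 4)):ℕ) = 1 from rfl]

lemma pauli_diag_mul_mem {A B : Matrix (Q 3) (Q 3) ℂ}
    (hA : A ∈ PauliGroup 3) (hB : B ∈ PauliGroup 3)
    (hAd : ∀ x y, x ≠ y → A x y = 0) (hBd : ∀ x y, x ≠ y → B x y = 0) :
    A * B ∈ PauliGroup 3 := by
  obtain ⟨s, f, rfl⟩ := hA
  obtain ⟨t, g, rfl⟩ := hB
  have hf : ∀ i, od (f i) = 0 := diag_rep hAd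
  have hg : ∀ i, od (g i) = 0 := diag_rep hBd
  refine ⟨s + t, fun i => if f i = g i then 0 else 3, ?_⟩
  ext x y
  rw [diag_mul_apply hAd]
  by_cases h : x = y
  · subst h
    simp only [Matrix.smul_apply, tensorOp, Matrix.of_apply, smul_eq_mul]
    have hI : Complex.I ^ (((s + t : Fin 4)) : ℕ) = Complex.I ^ ((s : ℕ) + (t : ℕ)) := by
      rw [Fin.val_add, Ipow_mod]
    have hprod : (∏ i, pauli1 (f i) (x i) (x i) * pauli1 (g i) (x i) (x i))
        = ∏ i, pauli1 (if f i = g i then 0 else 3) (x i) (x i) :=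
      Finset.prod_congr rfl fun i _ => pauli1_diag_mul (hf i) (hg i) (x i)
    rw [hI, pow_add, mul_mul_mul_comm, ← Finset.prod_mul_distrib, hprod]
  · rw [hBd x y h, mul_zero]
    exact (tensor_offdiag_zero (s := s + t)
      (fun i => by by_cases hfg : f i = g i <;> simp [hfg, od]) h).symm

lemma pauli_diag_ct_mem {A : Matrix (Q 3) (Q 3) ℂ}
    (hA : A ∈ PauliGroup 3) (hAd : ∀ x y, x ≠ y → A x y = 0) :
    Aᴴ ∈ PauliGroup 3 := by
  obtain ⟨s, f, rfl⟩ := hA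
  have hf : ∀ i, od (f i) = 0 := diag_rep hAd
  refine ⟨![0,3,2,1] s, f, ?_⟩
  ext x y
  rw [Matrix.conjTranspose_apply]
  simp only [Matrix.smul_apply, tensorOp, Matrix.of_apply, smul_eq_mul, star_mul']
  rw [show (star (Complex.I ^ (s : ℕ))) = (starRingEnd ℂ) (Complex.I ^ (s : ℕ)) from rfl,
    conj_Ipow]
  congr 1
  rw [show (star (∏ i, pauli1 (f i) (y i) (x i)))
      = (starRingEnd ℂ) (∏ i, pauli1 (f i) (y i) (x i)) from rfl, map_prod]
  exact Finset.prod_congr rfl fun i _ => pauli1_conj_symm (hf i) (x i) (y i)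

lemma W_conj_cancel (k : ℕ) (A : Matrix (Q 3) (Q 3) ℂ) :
    (Wgate k)ᴴ * (Wgate k * A * (Wgate k)ᴴ) * Wgate k = A := by
  have h : (Wgate k)ᴴ * (Wgate k * A * (Wgate k)ᴴ) * Wgate k
      = (Wgate k)ᴴ * Wgate k * A * ((Wgate k)ᴴ * Wgate k) := by
    simp only [Matrix.mul_assoc]
  rw [h, WHW, Matrix.one_mul, Matrix.mul_one]

lemma Zon2_diag_apply (u : Q 3) : Zon 2 u u = if u 2 = 1 then -1 else 1 := by
  simp [Zon]

end Aux

/-- for `k ≥ 3`, the intersection `(W_k P_3 W_k†) ∩ P_3` does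
not contain any maximal abelian subgroup of the 3-qubit Pauli group; hence
`W_k` is not a semi-Clifford operation. -/
theorem Wgate_not_semiClifford (k : ℕ) (hk : 3 ≤ k) :
    (¬ ∃ G, IsMaxAbelian 3 G ∧
        G ⊆ ((fun A => Wgate k * A * (Wgate k)ᴴ) '' PauliGroup 3) ∩ PauliGroup 3) ∧
    ¬ SemiClifford 3 (Wgate k) := by

  have main : ¬ ∃ G, IsMaxAbelian 3 G ∧
      G ⊆ ((fun A => Wgate k * A * (Wgate k)ᴴ) '' PauliGroup 3) ∩ PauliGroup 3 := by
    rintro ⟨G, hG, hsub⟩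
    have hconj : ∀ P ∈ G, (Wgate k)ᴴ * P * Wgate k ∈ PauliGroup 3 := by
      intro P hP
      obtain ⟨QP, hQP, hEq⟩ := (hsub hP).1
      have h' : (Wgate k)ᴴ * P * Wgate k = QP := by
        rw [← hEq]; exact W_conj_cancel k QP
      rw [h']; exact hQP
    have hGdiag : ∀ P ∈ G, ∀ x y, x ≠ y → P x y = 0 :=
      fun P hP => pauli_conj_diag hk (hsub hP).2 (hconj P hP)
    set D : Set (Matrix (Q 3) (Q 3) ℂ) :=
      {M | M ∈ PauliGroup 3 ∧ ∀ x y, x ≠ y → M x y = 0} with hDdef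
    have hDmem : ∀ M, M ∈ D ↔ M ∈ PauliGroup 3 ∧ ∀ x y, x ≠ y → M x y = 0 := fun M => Iff.rfl
    have hDsub : IsPauliSubgroup 3 D := by
      refine ⟨fun M hM => hM.1, ⟨one_mem_pauli, fun x y h => Matrix.one_apply_ne h⟩, ?_, ?_⟩
      · intro A hA B hB
        refine ⟨pauli_diag_mul_mem hA.1 hB.1 hA.2 hB.2, ?_⟩
        intro x y h
        rw [diag_mul_apply hA.2 x y, hB.2 x y h, mul_zero]
      · intro A hA
        refine ⟨pauli_diag_ct_mem hA.1 hA.2, ?_⟩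
        intro x y h
        rw [Matrix.conjTranspose_apply, hA.2 y x (Ne.symm h), star_zero]
    have hDcomm : ∀ A ∈ D, ∀ B ∈ D, A * B = B * A := by
      intro A hA B hB
      ext x y
      rw [diag_mul_apply hA.2 x y, diag_mul_apply hB.2 x y]
      by_cases h : x = y
      · subst h; ring
      · rw [hA.2 x y h, hB.2 x y h, mul_zero, mul_zero]
    have hGD : G ⊆ D := fun P hP => ⟨(hsub hP).2, hGdiag P hP⟩
    have hDG : D ⊆ G := hG.2.2 D hDsub hDcomm hGD
    have hZG : Zon 2 ∈ G := hDG ⟨Zon2_mem_pauli, Zon2_diag⟩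
    have hZconj : (Wgate k)ᴴ * Zon 2 * Wgate k ∈ PauliGroup 3 := hconj _ hZG
    have h4 := pauli_fourpoint hZconj
    rw [Wconj_apply, Wconj_apply, Wconj_apply, Wconj_apply] at h4
    simp only [conj_vp_mul_self, one_mul, Zon2_diag_apply] at h4
    norm_num [show (toffoliFun (![0,0,0] : Q 3)) 2 = 0 from by decide,
      show (toffoliFun (![1,1,0] : Q 3)) 2 = 1 from by decide,
      show (toffoliFun (![1,0,0] : Q 3)) 2 = 0 from by decide,
      show (toffoliFun (![0,1,0] : Q 3)) 2 = 0 from by decide] at h4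
  refine ⟨main, ?_⟩
  rintro ⟨-, G, hG, hG'⟩
  refine main ⟨(fun A => Wgate k * A * (Wgate k)ᴴ) '' G, hG', ?_⟩
  rintro P ⟨A, hA, rfl⟩
  exact ⟨⟨A, hG.1.1 hA, rfl⟩, hG'.1.1 ⟨A, hA, rfl⟩⟩
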